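/- Let n ≥ 2 and let π⁺, π⁻ be subsets of the simple roots π of sl_n with π⁺ ∪ π⁻ = π. If μ ∈ M, γ ∈ R_* and μ + γ ∈ Δ, then μ + γ ∈ R_*; if μ ∈ M, γ ∈ −R_* and μ + γ ∈ Δ, then μ + γ ∈ −R_*. (Lemma 1.8 (ix),(x).) -/

import Mathlib

open Pointwise

noncomputable def eps (n : ℕ) (i : Fin n) : Fin n → ℝ := Pi.single i 1

/-- The roots of `sl_n`: `ε_i - ε_j` for `i ≠ j`. -/
def Delta (n : ℕ) : Set (Fin n → ℝ) :=
  {v | ∃ i j : Fin n, i ≠ j ∧ v = eps n i - eps n j}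

/-- The positive roots: `ε_i - ε_j` for `i < j`. -/
def DeltaPos (n : ℕ) : Set (Fin n → ℝ) :=
  {v | ∃ i j : Fin n, i < j ∧ v = eps n i - eps n j}

/-- The negative roots. -/
def DeltaNeg (n : ℕ) : Set (Fin n → ℝ) := -DeltaPos n

/-- The simple roots `α_i = ε_i - ε_{i+1}`. -/
def simpleRoots (n : ℕ) : Set (Fin n → ℝ) :=
  {v | ∃ i j : Fin n, (j : ℕ) = (i : ℕ) + 1 ∧ v = eps n i - eps n j}

/-- The set of ℕ-linear combinations of elements of `S`. -/
def Nspan {n : ℕ} (S : Set (Fin n → ℝ)) : Set (Fin n → ℝ) :=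
  (AddSubmonoid.closure S : AddSubmonoid (Fin n → ℝ))

/-- `R = (ℕπ⁺ ∪ (−ℕπ⁻)) ∩ Δ`. -/
def Rset (n : ℕ) (Pp Pm : Set (Fin n → ℝ)) : Set (Fin n → ℝ) :=
  (Nspan Pp ∪ -Nspan Pm) ∩ Delta n

/-- `K = Δ \ R`. -/
def Kset (n : ℕ) (Pp Pm : Set (Fin n → ℝ)) : Set (Fin n → ℝ) :=
  Delta n \ Rset n Pp Pm

/-- `M = R ∩ (−R)`. -/
def Mset (n : ℕ) (Pp Pm : Set (Fin n → ℝ)) : Set (Fin n → ℝ) :=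
  Rset n Pp Pm ∩ -Rset n Pp Pm

/-- `R_* = (−R) \ M`. -/
def RstarSet (n : ℕ) (Pp Pm : Set (Fin n → ℝ)) : Set (Fin n → ℝ) :=
  -Rset n Pp Pm \ Mset n Pp Pm


-- auxiliary
noncomputable def sroot (n : ℕ) (k : ℕ) (hk : k + 1 < n) : Fin n → ℝ :=
  eps n ⟨k, Nat.lt_of_succ_lt hk⟩ - eps n ⟨k + 1, hk⟩

def seg (n : ℕ) (P : Set (Fin n → ℝ)) (a b : ℕ) : Prop :=
  ∀ k, a ≤ k → k < b → ∀ hk : k + 1 < n, sroot n k hk ∈ P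

noncomputable def csum (n k : ℕ) (v : Fin n → ℝ) : ℝ :=
  ∑ t : Fin n, if (t : ℕ) ≤ k then v t else 0

lemma csum_add (n k : ℕ) (v w : Fin n → ℝ) :
    csum n k (v + w) = csum n k v + csum n k w := by
  simp only [csum, Pi.add_apply, ← Finset.sum_add_distrib]
  refine Finset.sum_congr rfl fun t _ => ?_
  split_ifs <;> simp

lemma csum_eps (n k : ℕ) (i : Fin n) :
    csum n k (eps n i) = if (i : ℕ) ≤ k then 1 else 0 := by
  have h : ∀ t : Fin n, (if (t : ℕ) ≤ k then eps n i t else 0)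
      = if t = i then (if (i : ℕ) ≤ k then (1:ℝ) else 0) else 0 := by
    intro t
    by_cases ht : t = i
    · subst ht; simp [eps]
    · simp [eps, Pi.single_apply, ht]
  rw [csum, Finset.sum_congr rfl fun t _ => h t, Finset.sum_ite_eq' Finset.univ i]
  simp

lemma csum_root (n k : ℕ) (i j : Fin n) :
    csum n k (eps n i - eps n j)
      = (if (i : ℕ) ≤ k then 1 else 0) - (if (j : ℕ) ≤ k then 1 else 0) := by
  have : eps n i - eps n j + eps n j = eps n i := by abel
  have h2 := csum_add n k (eps n i - eps n j) (eps n j)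
  rw [this, csum_eps, csum_eps] at h2
  linarith [h2]

lemma nspan_prop {n : ℕ} {P : Set (Fin n → ℝ)} (hP : P ⊆ simpleRoots n)
    {v : Fin n → ℝ} (hv : v ∈ Nspan P) :
    ∀ k, 0 ≤ csum n k v ∧ (csum n k v ≠ 0 →
      ∀ hk : k + 1 < n, sroot n k hk ∈ P) := by
  induction hv using AddSubmonoid.closure_induction with
  | mem x hx =>
      intro k
      obtain ⟨i, j, hji, hx'⟩ := hP hx
      subst hx'
      rw [csum_root, hji]
      by_cases hik : (i : ℕ) ≤ k
      · by_cases hjk : (i : ℕ) + 1 ≤ k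
        · simp [hik, hjk]
        · have hk_eq : k = (i : ℕ) := by omega
          refine ⟨by simp [hik, hjk], fun _ hk => ?_⟩
          have e1 : (⟨k, Nat.lt_of_succ_lt hk⟩ : Fin n) = i := Fin.ext (by simp [hk_eq])
          have e2 : (⟨k + 1, hk⟩ : Fin n) = j := Fin.ext (by simp [hk_eq, hji])
          have : sroot n k hk = eps n i - eps n j := by rw [sroot, e1, e2]
          rw [this]; exact hx
      · have hjk : ¬ ((i : ℕ) + 1 ≤ k) := by omega
        simp [hik, hjk]
  | zero => intro k; simp [csum]
  | add x y hx hy ihx ihy =>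
      intro k
      rw [csum_add]
      obtain ⟨hx0, hx1⟩ := ihx k
      obtain ⟨hy0, hy1⟩ := ihy k
      refine ⟨by linarith, fun hne hk => ?_⟩
      rcases eq_or_ne (csum n k x) 0 with h | h
      · exact hy1 (by intro h'; exact hne (by rw [h, h']; ring)) hk
      · exact hx1 h hk

lemma mem_nspan_iff {n : ℕ} {P : Set (Fin n → ℝ)} (hP : P ⊆ simpleRoots n)
    (i j : Fin n) (hij : i ≠ j) :
    eps n i - eps n j ∈ Nspan P ↔ (i : ℕ) < (j : ℕ) ∧ seg n P i j := by
  constructor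
  · intro hv
    have hij' : (i : ℕ) ≠ (j : ℕ) := fun h => hij (Fin.ext h)
    have key := nspan_prop hP hv
    have hlt : (i : ℕ) < (j : ℕ) := by
      by_contra h
      have hji : (j : ℕ) < (i : ℕ) := by omega
      have hk : (j : ℕ) + 1 < n := by have := i.isLt; omega
      have := (key (j : ℕ)).1
      rw [csum_root] at this
      simp only [le_refl, if_pos, if_neg (by omega : ¬ (i:ℕ) ≤ (j:ℕ))] at this
      norm_num at this
    refine ⟨hlt, fun k hk1 hk2 hk => ?_⟩
    have := (key k).2 ?_ hk
    · exact this
    · rw [csum_root, if_pos hk1, if_neg (by omega)]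
      norm_num
  · rintro ⟨hlt, hseg⟩
    -- telescoping
    have main : ∀ d : ℕ, ∀ i j : Fin n, (i : ℕ) + d + 1 = (j : ℕ) →
        seg n P i j → eps n i - eps n j ∈ Nspan P := by
      intro d
      induction d with
      | zero =>
          intro i j hd hseg
          have hk : (i : ℕ) + 1 < n := by have := j.isLt; omega
          have h1 := hseg (i : ℕ) le_rfl (by omega) hk
          have e1 : (⟨(i : ℕ), Nat.lt_of_succ_lt hk⟩ : Fin n) = i := Fin.ext rfl
          have e2 : (⟨(i : ℕ) + 1, hk⟩ : Fin n) = j := Fin.ext (by simp [hd])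
          rw [sroot, e1, e2] at h1
          exact AddSubmonoid.subset_closure h1
      | succ d ih =>
          intro i j hd hseg
          have hm : (i : ℕ) + 1 < n := by have := j.isLt; omega
          set m : Fin n := ⟨(i : ℕ) + 1, hm⟩ with hm_def
          have h1 : eps n i - eps n m ∈ Nspan P := by
            have h1 := hseg (i : ℕ) le_rfl (by omega) hm
            have e1 : (⟨(i : ℕ), Nat.lt_of_succ_lt hm⟩ : Fin n) = i := Fin.ext rfl
            rw [sroot, e1] at h1
            exact AddSubmonoid.subset_closure h1
          have h2 : eps n m - eps n j ∈ Nspan P := by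
            refine ih m j (by simp [hm_def]; omega) ?_
            intro k hk1 hk2 hk
            exact hseg k (by simp [hm_def] at hk1; omega) hk2 hk
          have hsum := AddSubmonoid.add_mem _ h1 h2
          have he : eps n i - eps n m + (eps n m - eps n j) = eps n i - eps n j := by abel
          rwa [he] at hsum
    exact main ((j : ℕ) - (i : ℕ) - 1) i j (by omega) hseg
-- end mem_nspan_iff

lemma neg_Delta (n : ℕ) : -Delta n = Delta n := by
  have h : ∀ v ∈ Delta n, -v ∈ Delta n := by
    rintro v ⟨i, j, hij, rfl⟩
    exact ⟨j, i, hij.symm, by abel⟩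
  ext v
  constructor
  · intro hv
    have := h (-v) (Set.mem_neg.mp hv)
    rwa [neg_neg] at this
  · intro hv
    exact Set.mem_neg.mpr (h v hv)

lemma mem_neg_self {α : Type*} [InvolutiveNeg α] {S : Set α} (hS : -S = S) (v : α) :
    -v ∈ S ↔ v ∈ S := by
  constructor <;> intro h
  · have h2 : -v ∈ -S := by rw [hS]; exact h
    rwa [Set.mem_neg, neg_neg] at h2
  · have h2 : v ∈ -S := by rw [hS]; exact h
    rwa [Set.mem_neg] at h2

lemma neg_Rset (n : ℕ) (Pp Pm : Set (Fin n → ℝ)) :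
    -Rset n Pp Pm = Rset n Pm Pp := by
  ext v
  simp only [Rset, Set.mem_neg, Set.mem_inter_iff, Set.mem_union, neg_neg]
  rw [mem_neg_self (neg_Delta n) v]
  tauto

lemma Set.neg_diff' {α : Type*} [InvolutiveNeg α] (A B : Set α) :
    -(A \ B) = (-A) \ (-B) := by
  ext v; simp [Set.mem_diff, Set.mem_neg]

lemma Mset_swap (n : ℕ) (Pp Pm : Set (Fin n → ℝ)) :
    Mset n Pp Pm = Mset n Pm Pp := by
  rw [Mset, Mset, ← neg_Rset n Pp Pm, ← neg_Rset n Pm Pp, neg_neg, Set.inter_comm]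

lemma neg_Mset (n : ℕ) (Pp Pm : Set (Fin n → ℝ)) :
    -Mset n Pp Pm = Mset n Pp Pm := by
  rw [Mset, Set.inter_neg, neg_neg, Set.inter_comm]

lemma neg_Rstar (n : ℕ) (Pp Pm : Set (Fin n → ℝ)) :
    -RstarSet n Pp Pm = RstarSet n Pm Pp := by
  rw [RstarSet, RstarSet, Set.neg_diff', neg_neg, neg_Mset, Mset_swap, ← neg_Rset]

lemma mem_R_pos {n : ℕ} {Pp Pm : Set (Fin n → ℝ)} (hPp : Pp ⊆ simpleRoots n)
    (hPm : Pm ⊆ simpleRoots n) {i j : Fin n} (hij : (i : ℕ) < (j : ℕ)) :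
    eps n i - eps n j ∈ Rset n Pp Pm ↔ seg n Pp i j := by
  have hne : i ≠ j := fun h => by simp [h] at hij
  constructor
  · rintro ⟨h1, -⟩
    rcases h1 with h | h
    · exact ((mem_nspan_iff hPp i j hne).mp h).2
    · rw [Set.mem_neg, neg_sub] at h
      have := ((mem_nspan_iff hPm j i hne.symm).mp h).1
      omega
  · intro hseg
    exact ⟨Or.inl ((mem_nspan_iff hPp i j hne).mpr ⟨hij, hseg⟩), ⟨i, j, hne, rfl⟩⟩

lemma mem_negR_pos {n : ℕ} {Pp Pm : Set (Fin n → ℝ)} (hPp : Pp ⊆ simpleRoots n)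
    (hPm : Pm ⊆ simpleRoots n) {i j : Fin n} (hij : (i : ℕ) < (j : ℕ)) :
    eps n i - eps n j ∈ -Rset n Pp Pm ↔ seg n Pm i j := by
  rw [neg_Rset]; exact mem_R_pos hPm hPp hij

lemma mem_M_pos {n : ℕ} {Pp Pm : Set (Fin n → ℝ)} (hPp : Pp ⊆ simpleRoots n)
    (hPm : Pm ⊆ simpleRoots n) {i j : Fin n} (hij : (i : ℕ) < (j : ℕ)) :
    eps n i - eps n j ∈ Mset n Pp Pm ↔ seg n Pp i j ∧ seg n Pm i j := by
  rw [Mset, Set.mem_inter_iff, mem_R_pos hPp hPm hij, mem_negR_pos hPp hPm hij]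

lemma mem_Rstar_pos {n : ℕ} {Pp Pm : Set (Fin n → ℝ)} (hPp : Pp ⊆ simpleRoots n)
    (hPm : Pm ⊆ simpleRoots n) {i j : Fin n} (hij : (i : ℕ) < (j : ℕ)) :
    eps n i - eps n j ∈ RstarSet n Pp Pm ↔ seg n Pm i j ∧ ¬ seg n Pp i j := by
  rw [RstarSet, Set.mem_diff, mem_negR_pos hPp hPm hij, mem_M_pos hPp hPm hij]
  tauto

lemma mem_M_neg {n : ℕ} {Pp Pm : Set (Fin n → ℝ)} (hPp : Pp ⊆ simpleRoots n)
    (hPm : Pm ⊆ simpleRoots n) {i j : Fin n} (hij : (j : ℕ) < (i : ℕ)) :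
    eps n i - eps n j ∈ Mset n Pp Pm ↔ seg n Pp j i ∧ seg n Pm j i := by
  have : eps n i - eps n j ∈ Mset n Pp Pm ↔ eps n j - eps n i ∈ Mset n Pp Pm := by
    rw [show eps n i - eps n j = -(eps n j - eps n i) from by abel,
      mem_neg_self (neg_Mset n Pp Pm)]
  rw [this, mem_M_pos hPp hPm hij]

lemma mem_Rstar_neg {n : ℕ} {Pp Pm : Set (Fin n → ℝ)} (hPp : Pp ⊆ simpleRoots n)
    (hPm : Pm ⊆ simpleRoots n) {i j : Fin n} (hij : (j : ℕ) < (i : ℕ)) :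
    eps n i - eps n j ∈ RstarSet n Pp Pm ↔ seg n Pp j i ∧ ¬ seg n Pm j i := by
  have : eps n i - eps n j ∈ RstarSet n Pp Pm ↔
      eps n j - eps n i ∈ RstarSet n Pm Pp := by
    rw [← neg_Rstar, Set.mem_neg, neg_sub]
  rw [this, mem_Rstar_pos hPm hPp hij]

section core
variable {SP SQ : ℕ → Prop}

def Mp (SP SQ : ℕ → Prop) (x y : ℕ) : Prop := ∀ k, x ≤ k → k < y → SP k ∧ SQ k
def Gp (SP SQ : ℕ → Prop) (x y : ℕ) : Prop :=
  (∀ k, x ≤ k → k < y → SQ k) ∧ ∃ k, x ≤ k ∧ k < y ∧ ¬ SP k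

lemma core_false {x y a b : ℕ} (hM : Mp SP SQ x y) (hG : Gp SP SQ a b)
    (h1 : x ≤ a) (h2 : b ≤ y) : False := by
  obtain ⟨-, k, hk1, hk2, hk3⟩ := hG
  exact hk3 (hM k (by omega) (by omega)).1

lemma core_extL {a b d : ℕ} (hM : Mp SP SQ a b) (hG : Gp SP SQ b d) (hab : a ≤ b) :
    Gp SP SQ a d := by
  obtain ⟨hs, k, hk1, hk2, hk3⟩ := hG
  refine ⟨fun m hm1 hm2 => ?_, k, by omega, hk2, hk3⟩
  by_cases h : m < b
  · exact (hM m hm1 h).2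
  · exact hs m (by omega) hm2

lemma core_extR {a b d : ℕ} (hM : Mp SP SQ b d) (hG : Gp SP SQ a b) (hbd : b ≤ d) :
    Gp SP SQ a d := by
  obtain ⟨hs, k, hk1, hk2, hk3⟩ := hG
  refine ⟨fun m hm1 hm2 => ?_, k, hk1, by omega, hk3⟩
  by_cases h : m < b
  · exact hs m hm1 h
  · exact (hM m (by omega) hm2).2

lemma core_shrinkL {a b d : ℕ} (hM : Mp SP SQ b a) (hG : Gp SP SQ b d) (hba : b ≤ a) :
    Gp SP SQ a d := by
  obtain ⟨hs, k, hk1, hk2, hk3⟩ := hG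
  have hka : a ≤ k := by
    by_contra h
    exact hk3 (hM k hk1 (by omega)).1
  exact ⟨fun m hm1 hm2 => hs m (by omega) hm2, k, hka, hk2, hk3⟩

lemma core_shrinkR {a b y : ℕ} (hM : Mp SP SQ y b) (hG : Gp SP SQ a b) (hyb : y ≤ b) :
    Gp SP SQ a y := by
  obtain ⟨hs, k, hk1, hk2, hk3⟩ := hG
  have hky : k < y := by
    by_contra h
    exact hk3 (hM k (by omega) hk2).1
  exact ⟨fun m hm1 hm2 => hs m hm1 (by omega), k, hk1, hky, hk3⟩

end core

lemma concat {n : ℕ} {a b c d : Fin n} (hab : a ≠ b) (hcd : c ≠ d)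
    (h : eps n a - eps n b + (eps n c - eps n d) ∈ Delta n) :
    (b = c ∧ a ≠ d) ∨ (a = d ∧ b ≠ c) := by
  obtain ⟨p, q, hpq, heq⟩ := h
  by_cases hbc : b = c
  · left
    refine ⟨hbc, fun had => ?_⟩
    subst hbc; subst had
    have h0 : eps n a - eps n b + (eps n b - eps n a) = 0 := by abel
    rw [h0] at heq
    have E := congrFun heq p
    simp [eps, Pi.single_apply, hpq] at E
  · right
    refine ⟨?_, hbc⟩
    by_contra had
    have E := congrFun heq b
    simp only [Pi.add_apply, Pi.sub_apply, eps, Pi.single_apply, if_pos rfl] at E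
    rw [if_neg (fun h => hab h.symm), if_neg hbc] at E
    have hbd : b ≠ d := by
      intro h; rw [if_pos h] at E; split_ifs at E <;> norm_num at E
    rw [if_neg hbd] at E
    have hbq : b = q := by
      by_contra h; rw [if_neg h] at E; split_ifs at E <;> norm_num at E
    have F := congrFun heq d
    simp only [Pi.add_apply, Pi.sub_apply, eps, Pi.single_apply, if_pos rfl] at F
    rw [if_neg (fun h : d = a => had h.symm), if_neg (fun h : d = b => hbd h.symm),
      if_neg (fun h : d = c => hcd h.symm)] at F
    have hdq : d = q := by
      by_contra h; rw [if_neg h] at F; split_ifs at F <;> norm_num at F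
    exact hbd (hbq.trans hdq.symm)

def SPp (n : ℕ) (P : Set (Fin n → ℝ)) (k : ℕ) : Prop :=
  ∀ hk : k + 1 < n, sroot n k hk ∈ P

section glue
variable {n : ℕ} {Pp Pm : Set (Fin n → ℝ)} (hPp : Pp ⊆ simpleRoots n)
  (hPm : Pm ⊆ simpleRoots n)
include hPp hPm

lemma Mp_of_mem {i j : Fin n} (hij : (i : ℕ) < (j : ℕ))
    (h : eps n i - eps n j ∈ Mset n Pp Pm) :
    Mp (SPp n Pp) (SPp n Pm) (i : ℕ) (j : ℕ) := by
  obtain ⟨h1, h2⟩ := (mem_M_pos hPp hPm hij).mp h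
  exact fun k hk1 hk2 => ⟨h1 k hk1 hk2, h2 k hk1 hk2⟩

lemma Mp_of_mem_neg {i j : Fin n} (hij : (j : ℕ) < (i : ℕ))
    (h : eps n i - eps n j ∈ Mset n Pp Pm) :
    Mp (SPp n Pp) (SPp n Pm) (j : ℕ) (i : ℕ) := by
  obtain ⟨h1, h2⟩ := (mem_M_neg hPp hPm hij).mp h
  exact fun k hk1 hk2 => ⟨h1 k hk1 hk2, h2 k hk1 hk2⟩

omit hPp hPm in
lemma Mp_swap {SP SQ : ℕ → Prop} {x y : ℕ} (h : Mp SP SQ x y) : Mp SQ SP x y :=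
  fun k h1 h2 => ⟨(h k h1 h2).2, (h k h1 h2).1⟩

lemma Gp_of_Rstar_pos {i j : Fin n} (hij : (i : ℕ) < (j : ℕ))
    (h : eps n i - eps n j ∈ RstarSet n Pp Pm) :
    Gp (SPp n Pp) (SPp n Pm) (i : ℕ) (j : ℕ) := by
  obtain ⟨h1, h2⟩ := (mem_Rstar_pos hPp hPm hij).mp h
  refine ⟨fun k hk1 hk2 => h1 k hk1 hk2, ?_⟩
  by_contra h3
  push_neg at h3
  exact h2 (fun k hk1 hk2 hk => (h3 k hk1 hk2) hk)

lemma Gp_of_Rstar_neg {i j : Fin n} (hij : (j : ℕ) < (i : ℕ))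
    (h : eps n i - eps n j ∈ RstarSet n Pp Pm) :
    Gp (SPp n Pm) (SPp n Pp) (j : ℕ) (i : ℕ) := by
  obtain ⟨h1, h2⟩ := (mem_Rstar_neg hPp hPm hij).mp h
  refine ⟨fun k hk1 hk2 => h1 k hk1 hk2, ?_⟩
  by_contra h3
  push_neg at h3
  exact h2 (fun k hk1 hk2 hk => (h3 k hk1 hk2) hk)

lemma Rstar_of_Gp_pos {i j : Fin n} (hij : (i : ℕ) < (j : ℕ))
    (h : Gp (SPp n Pp) (SPp n Pm) (i : ℕ) (j : ℕ)) :
    eps n i - eps n j ∈ RstarSet n Pp Pm := by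
  obtain ⟨h1, k, hk1, hk2, hk3⟩ := h
  exact (mem_Rstar_pos hPp hPm hij).mpr
    ⟨fun k h1' h2' => h1 k h1' h2', fun hs => hk3 (fun hk => hs k hk1 hk2 hk)⟩

lemma Rstar_of_Gp_neg {i j : Fin n} (hij : (j : ℕ) < (i : ℕ))
    (h : Gp (SPp n Pm) (SPp n Pp) (j : ℕ) (i : ℕ)) :
    eps n i - eps n j ∈ RstarSet n Pp Pm := by
  obtain ⟨h1, k, hk1, hk2, hk3⟩ := h
  exact (mem_Rstar_neg hPp hPm hij).mpr
    ⟨fun k h1' h2' => h1 k h1' h2', fun hs => hk3 (fun hk => hs k hk1 hk2 hk)⟩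

end glue

lemma main_lemma (n : ℕ) (Pp Pm : Set (Fin n → ℝ))
    (hPp : Pp ⊆ simpleRoots n) (hPm : Pm ⊆ simpleRoots n) :
    ∀ μ ∈ Mset n Pp Pm, ∀ γ ∈ RstarSet n Pp Pm,
      μ + γ ∈ Delta n → μ + γ ∈ RstarSet n Pp Pm := by
  intro μ hμ γ hγ hsum
  obtain ⟨a, b, hab, rfl⟩ : μ ∈ Delta n := hμ.1.2
  obtain ⟨c, d, hcd, rfl⟩ : γ ∈ Delta n := by
    have h1 := hγ.1
    rw [neg_Rset] at h1
    exact h1.2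
  have hab' : (a : ℕ) ≠ (b : ℕ) := fun h => hab (Fin.ext h)
  have hcd' : (c : ℕ) ≠ (d : ℕ) := fun h => hcd (Fin.ext h)
  rcases concat hab hcd hsum with ⟨rfl, had⟩ | ⟨rfl, hbc⟩
  · -- b = c : sum = eps a - eps d
    have had' : (a : ℕ) ≠ (d : ℕ) := fun h => had (Fin.ext h)
    have hEq : eps n a - eps n b + (eps n b - eps n d) = eps n a - eps n d := by abel
    rw [hEq]
    rcases Nat.lt_or_ge (a : ℕ) (b : ℕ) with hAB | hAB
    · have hM := Mp_of_mem hPp hPm hAB hμ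
      rcases Nat.lt_or_ge (b : ℕ) (d : ℕ) with hBD | hBD
      · -- i : A<B<D
        have hG := Gp_of_Rstar_pos hPp hPm hBD hγ
        exact Rstar_of_Gp_pos hPp hPm (by omega) (core_extL hM hG (by omega))
      · have hDB : (d : ℕ) < (b : ℕ) := by omega
        have hG := Gp_of_Rstar_neg hPp hPm hDB hγ
        rcases Nat.lt_or_ge (d : ℕ) (a : ℕ) with hDA | hDA
        · -- ii
          exact Rstar_of_Gp_neg hPp hPm hDA (core_shrinkR (Mp_swap hM) hG (by omega))
        · -- iii : impossible
          exact absurd (core_false (Mp_swap hM) hG (by omega) (by omega)) (by simp)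
    · have hBA : (b : ℕ) < (a : ℕ) := by omega
      have hM := Mp_of_mem_neg hPp hPm hBA hμ
      rcases Nat.lt_or_ge (b : ℕ) (d : ℕ) with hBD | hBD
      · have hG := Gp_of_Rstar_pos hPp hPm hBD hγ
        rcases Nat.lt_or_ge (a : ℕ) (d : ℕ) with hAD | hAD
        · -- iv
          exact Rstar_of_Gp_pos hPp hPm hAD (core_shrinkL hM hG (by omega))
        · -- v : impossible
          exact absurd (core_false hM hG (by omega) (by omega)) (by simp)
      · have hDB : (d : ℕ) < (b : ℕ) := by omega
        have hG := Gp_of_Rstar_neg hPp hPm hDB hγ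
        -- vi : D<B<A
        exact Rstar_of_Gp_neg hPp hPm (by omega)
          (core_extR (Mp_swap hM) hG (by omega))
  · -- a = d : sum = eps c - eps b
    have hbc' : (b : ℕ) ≠ (c : ℕ) := fun h => hbc (Fin.ext h)
    have hEq : eps n a - eps n b + (eps n c - eps n a) = eps n c - eps n b := by abel
    rw [hEq]
    rcases Nat.lt_or_ge (c : ℕ) (a : ℕ) with hCA | hCA
    · have hG := Gp_of_Rstar_pos hPp hPm hCA hγ
      rcases Nat.lt_or_ge (a : ℕ) (b : ℕ) with hAB | hAB
      · -- i : C<A<B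
        have hM := Mp_of_mem hPp hPm hAB hμ
        exact Rstar_of_Gp_pos hPp hPm (by omega) (core_extR hM hG (by omega))
      · have hBA : (b : ℕ) < (a : ℕ) := by omega
        have hM := Mp_of_mem_neg hPp hPm hBA hμ
        rcases Nat.lt_or_ge (c : ℕ) (b : ℕ) with hCB | hCB
        · -- ii
          exact Rstar_of_Gp_pos hPp hPm hCB (core_shrinkR hM hG (by omega))
        · -- iii : impossible
          exact absurd (core_false hM hG (by omega) (by omega)) (by simp)
    · have hAC : (a : ℕ) < (c : ℕ) := by omega
      have hG := Gp_of_Rstar_neg hPp hPm hAC hγ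
      rcases Nat.lt_or_ge (a : ℕ) (b : ℕ) with hAB | hAB
      · have hM := Mp_of_mem hPp hPm hAB hμ
        rcases Nat.lt_or_ge (b : ℕ) (c : ℕ) with hBC | hBC
        · -- iv
          exact Rstar_of_Gp_neg hPp hPm hBC (core_shrinkL (Mp_swap hM) hG (by omega))
        · -- v : impossible
          exact absurd (core_false (Mp_swap hM) hG (by omega) (by omega)) (by simp)
      · have hBA : (b : ℕ) < (a : ℕ) := by omega
        have hM := Mp_of_mem_neg hPp hPm hBA hμ
        -- vi : B<A<C
        exact Rstar_of_Gp_neg hPp hPm (by omega) (core_extL (Mp_swap hM) hG (by omega))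


/-- Lemma 1.8 (ix),(x): `(M + R_*) ∩ Δ ⊆ R_*` and `(M + (−R_*)) ∩ Δ ⊆ −R_*`. -/
theorem statement_4 (n : ℕ) (hn : 2 ≤ n) (Pp Pm : Set (Fin n → ℝ))
    (hPp : Pp ⊆ simpleRoots n) (hPm : Pm ⊆ simpleRoots n)
    (hU : Pp ∪ Pm = simpleRoots n) :
    (∀ μ ∈ Mset n Pp Pm, ∀ γ ∈ RstarSet n Pp Pm,
      μ + γ ∈ Delta n → μ + γ ∈ RstarSet n Pp Pm) ∧
    (∀ μ ∈ Mset n Pp Pm, ∀ γ ∈ -RstarSet n Pp Pm,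
      μ + γ ∈ Delta n → μ + γ ∈ -RstarSet n Pp Pm) := by
  refine ⟨main_lemma n Pp Pm hPp hPm, ?_⟩
  intro μ hμ γ hγ hsum
  rw [neg_Rstar] at hγ ⊢
  rw [Mset_swap] at hμ
  exact main_lemma n Pm Pp hPm hPp μ hμ γ hγ hsum
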